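/- Discrete bound on the Shapley gap from bounded second mixed differences. Let U be a finite set with |U| = M ≥ 2, let v be a value function on subsets of U, let i ≠ j be elements of U, and let B ≥ 0. Suppose that for every subset S ⊆ U∖{i,j}, the second mixed difference satisfies |v(S ∪ {i,j}) − v(S ∪ {j}) − v(S ∪ {i}) + v(S)| ≤ B. Then |φ_i(v, U) − φ_i(v, U∖{j})| ≤ B/2. -/

import Mathlib

open Finset

/-- The Shapley value of feature `i` in the cooperative game with value function `v`
restricted to the coalition `T`:
`φ_i(v, T) = (1/|T|) · Σ_{S ⊆ T∖{i}} C(|T|−1, |S|)⁻¹ · (v (S ∪ {i}) − v S)`. -/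
noncomputable def shapley {α : Type*} [DecidableEq α] (v : Finset α → ℝ) (T : Finset α)
    (i : α) : ℝ :=
  (T.card : ℝ)⁻¹ * ∑ S ∈ (T.erase i).powerset,
    ((T.card - 1).choose S.card : ℝ)⁻¹ * (v (insert i S) - v S)

lemma gauss_real (n : ℕ) : ∑ k ∈ Finset.range n, ((k : ℝ) + 1) = n * (n + 1) / 2 := by
  induction n with
  | zero => simp
  | succ n ih => rw [Finset.sum_range_succ, ih]; push_cast; ring

lemma ratio_eq (m s : ℕ) (hs : s ≤ m) :
    (m.choose s : ℝ) * (((m+1).choose (s+1) : ℕ) : ℝ)⁻¹ = (s + 1) / (m + 1) := by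
  have h1 : (m + 1) * m.choose s = (m + 1).choose (s + 1) * (s + 1) :=
    Nat.add_one_mul_choose_eq m s
  have hpos : 0 < (m+1).choose (s+1) := Nat.choose_pos (by omega)
  have hpos' : (0:ℝ) < ((m+1).choose (s+1) : ℝ) := by exact_mod_cast hpos
  have h1' : ((m:ℝ) + 1) * (m.choose s : ℝ) = ((m+1).choose (s+1) : ℝ) * (s + 1) := by
    exact_mod_cast h1
  field_simp
  linarith [h1']

lemma weight_eq (m s : ℕ) (hs : s ≤ m) :
    ((m+2:ℕ) : ℝ)⁻¹ * (((m+1).choose s : ℕ) : ℝ)⁻¹ + ((m+2:ℕ) : ℝ)⁻¹ * (((m+1).choose (s+1) : ℕ) : ℝ)⁻¹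
      = ((m+1:ℕ) : ℝ)⁻¹ * ((m.choose s : ℕ) : ℝ)⁻¹ := by
  have h1 : (m + 1) * m.choose s = (m + 1).choose (s + 1) * (s + 1) :=
    Nat.add_one_mul_choose_eq m s
  have h2 : m.choose s * (m + 1) = (m + 1).choose s * (m + 1 - s) :=
    Nat.choose_mul_succ_eq m s
  have hsub : m + 1 - s = m - s + 1 := by omega
  have h0 : 0 < m.choose s := Nat.choose_pos hs
  have ha : 0 < (m+1).choose s := Nat.choose_pos (by omega)
  have hb : 0 < (m+1).choose (s+1) := Nat.choose_pos (by omega)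
  have h0' : (0:ℝ) < (m.choose s : ℝ) := by exact_mod_cast h0
  have ha' : (0:ℝ) < ((m+1).choose s : ℝ) := by exact_mod_cast ha
  have hb' : (0:ℝ) < ((m+1).choose (s+1) : ℝ) := by exact_mod_cast hb
  have h1' : ((m:ℝ) + 1) * (m.choose s : ℝ) = ((m+1).choose (s+1) : ℝ) * ((s:ℝ) + 1) := by
    exact_mod_cast h1
  have h2' : (m.choose s : ℝ) * ((m:ℝ) + 1) = ((m+1).choose s : ℝ) * (((m:ℝ) - s) + 1) := by
    rw [hsub] at h2
    have := h2
    push_cast [Nat.cast_sub hs] at *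
    exact_mod_cast this
  push_cast
  field_simp
  linear_combination (((m+1).choose (s+1)):ℝ)*h2' + (((m+1).choose s):ℝ)*h1'

lemma count_sum {α : Type*} [DecidableEq α] (m : ℕ) (A : Finset α) (hcardA : A.card = m) :
    ∑ S ∈ A.powerset, ((m+2:ℕ) : ℝ)⁻¹ * (((m+1).choose (S.card+1) : ℕ) : ℝ)⁻¹ = 1/2 := by
  rw [Finset.sum_powerset, hcardA]
  have hinner : ∀ k ∈ Finset.range (m+1),
      ∑ S ∈ Finset.powersetCard k A, ((m+2:ℕ) : ℝ)⁻¹ * (((m+1).choose (S.card+1) : ℕ) : ℝ)⁻¹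
        = ((m:ℝ)+2)⁻¹ * (((m:ℝ)+1)⁻¹ * ((k:ℝ)+1)) := by
    intro k hk
    have hk' : k ≤ m := by simp at hk; omega
    have hcard : ∀ S ∈ Finset.powersetCard k A, S.card = k := fun S hS =>
      (Finset.mem_powersetCard.mp hS).2
    rw [Finset.sum_congr rfl (fun S hS => by rw [hcard S hS]), Finset.sum_const,
      Finset.card_powersetCard, hcardA, nsmul_eq_mul]
    have hr := ratio_eq m k hk'
    push_cast at hr ⊢
    calc (m.choose k : ℝ) * (((m:ℝ)+2)⁻¹ * (((m+1).choose (k+1) : ℕ) : ℝ)⁻¹)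
        = ((m:ℝ)+2)⁻¹ * ((m.choose k : ℝ) * (((m+1).choose (k+1) : ℕ) : ℝ)⁻¹) := by
          push_cast; ring
      _ = ((m:ℝ)+2)⁻¹ * (((k:ℝ)+1) / ((m:ℝ)+1)) := by rw [hr]
      _ = ((m:ℝ)+2)⁻¹ * (((m:ℝ)+1)⁻¹ * ((k:ℝ)+1)) := by ring
  rw [Finset.sum_congr rfl hinner, ← Finset.mul_sum, ← Finset.mul_sum, gauss_real]
  have hm1 : ((m:ℝ)+1) ≠ 0 := by positivity
  have hm2 : ((m:ℝ)+2) ≠ 0 := by positivity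
  push_cast
  field_simp
  ring

/-- Discrete bound on the Shapley gap: if every second mixed difference of the value
function with respect to features `i` and `j` is bounded by `B`, then the gap between
the Shapley value of `i` in the grand game and in the game without `j` is at most `B/2`. -/
theorem shapley_gap_bound {α : Type*} [DecidableEq α] (U : Finset α) (M : ℕ)
    (hM : U.card = M) (hM2 : 2 ≤ M) (v : Finset α → ℝ) (i j : α)
    (hi : i ∈ U) (hj : j ∈ U) (hij : i ≠ j) (B : ℝ) (hB : 0 ≤ B)
    (hbound : ∀ S ∈ ((U.erase i).erase j).powerset,
      |v (insert i (insert j S)) - v (insert j S) - v (insert i S) + v S| ≤ B) :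
    |shapley v U i - shapley v (U.erase j) i| ≤ B / 2 := by
  obtain ⟨m, rfl⟩ : ∃ m, M = m + 2 := ⟨M - 2, by omega⟩
  have hji : j ∈ U.erase i := Finset.mem_erase.mpr ⟨hij.symm, hj⟩
  set A := (U.erase i).erase j with hAdef
  have hjA : j ∉ A := Finset.notMem_erase _ _
  have hUi : U.erase i = insert j A := (Finset.insert_erase hji).symm
  have hAi : (U.erase j).erase i = A := Finset.erase_right_comm
  have hcard1 : (U.erase i).card = m + 1 := by rw [Finset.card_erase_of_mem hi, hM]; omega
  have hcardj : (U.erase j).card = m + 1 := by rw [Finset.card_erase_of_mem hj, hM]; omega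
  have hcardA : A.card = m := by rw [hAdef, Finset.card_erase_of_mem hji, hcard1]; omega
  have key : shapley v U i - shapley v (U.erase j) i
      = ∑ S ∈ A.powerset, ((m+2:ℕ):ℝ)⁻¹ * (((m+1).choose (S.card+1) : ℕ):ℝ)⁻¹
          * (v (insert i (insert j S)) - v (insert j S) - v (insert i S) + v S) := by
    rw [shapley, shapley, hM, hcardj, hAi, hUi, Finset.sum_powerset_insert hjA]
    have e1 : m + 2 - 1 = m + 1 := by omega
    have e2 : m + 1 - 1 = m := by omega
    rw [e1, e2]
    have hins : ∀ S ∈ A.powerset,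
        (((m+1).choose (insert j S).card : ℕ):ℝ)⁻¹ * (v (insert i (insert j S)) - v (insert j S))
        = (((m+1).choose (S.card + 1) : ℕ):ℝ)⁻¹ * (v (insert i (insert j S)) - v (insert j S)) := by
      intro S hS
      have hjS : j ∉ S := fun h => hjA (Finset.mem_powerset.mp hS h)
      rw [Finset.card_insert_of_notMem hjS]
    rw [Finset.sum_congr rfl hins]
    rw [mul_add, Finset.mul_sum, Finset.mul_sum, Finset.mul_sum,
      ← Finset.sum_add_distrib, ← Finset.sum_sub_distrib]
    refine Finset.sum_congr rfl fun S hS => ?_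
    have hScard : S.card ≤ m := by
      have := Finset.card_le_card (Finset.mem_powerset.mp hS); omega
    linear_combination (v (insert i S) - v S) * weight_eq m S.card hScard
  rw [key]
  calc |∑ S ∈ A.powerset, ((m+2:ℕ):ℝ)⁻¹ * (((m+1).choose (S.card+1) : ℕ):ℝ)⁻¹
          * (v (insert i (insert j S)) - v (insert j S) - v (insert i S) + v S)|
      ≤ ∑ S ∈ A.powerset, |((m+2:ℕ):ℝ)⁻¹ * (((m+1).choose (S.card+1) : ℕ):ℝ)⁻¹
          * (v (insert i (insert j S)) - v (insert j S) - v (insert i S) + v S)| :=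
        Finset.abs_sum_le_sum_abs _ _
    _ ≤ ∑ S ∈ A.powerset, ((m+2:ℕ):ℝ)⁻¹ * (((m+1).choose (S.card+1) : ℕ):ℝ)⁻¹ * B := by
        refine Finset.sum_le_sum fun S hS => ?_
        have hw : (0:ℝ) ≤ ((m+2:ℕ):ℝ)⁻¹ * (((m+1).choose (S.card+1) : ℕ):ℝ)⁻¹ := by positivity
        rw [abs_mul, abs_of_nonneg hw]
        exact mul_le_mul_of_nonneg_left (hbound S hS) hw
    _ = (1/2) * B := by rw [← Finset.sum_mul, count_sum m A hcardA]
    _ = B / 2 := by ring
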